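/- arXiv:2304.14315 — 3 statements merged into one kernel-verified Lean document; each statement's English description precedes it below -/
import Mathlib

section
/- Let n ≥ 0 and let G be a group with subgroups H ≤ K such that both H and K are virtually ℤ^n. Then H has finite index in K; in particular H and K are commensurable. (This is the key point in verifying that commensurability is a strong equivalence relation on F_{n+1} − F_n: any two nested members of F_{n+1} − F_n are commensurable.) -/
/-- In `ℤ^n` (multiplicatively), taking `m`-th powers is injective for `m ≠ 0`. -/
private lemma zn_pow_eq_one {n m : ℕ} (hm : m ≠ 0) (z : Multiplicative (Fin n → ℤ))
    (hz : z ^ m = 1) : z = 1 := by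
  have h : m • z.toAdd = 0 := by
    have := congrArg Multiplicative.toAdd hz
    simpa using this
  have h' : (m : ℤ) • z.toAdd = 0 := by rwa [natCast_zsmul]
  have : z.toAdd = 0 := by
    rcases smul_eq_zero.mp h' with h0 | h0
    · exact absurd (by exact_mod_cast h0) hm
    · exact h0
  exact Multiplicative.toAdd.injective (by simpa using this)

/-- If a subgroup of `ℤ^n` contains the range of an injective endomorphism of `ℤ^n`,
then it has finite index. -/
private lemma crux {n : ℕ} (ψ : Multiplicative (Fin n → ℤ) →* Multiplicative (Fin n → ℤ))
    (hψ : Function.Injective ψ) (P : Subgroup (Multiplicative (Fin n → ℤ)))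
    (hle : ψ.range ≤ P) : P.FiniteIndex := by
  classical
  let f : (Fin n → ℤ) →ₗ[ℤ] (Fin n → ℤ) := (MonoidHom.toAdditive ψ).toIntLinearMap
  have hf : Function.Injective f := fun a b hab => hψ hab
  let M := LinearMap.toMatrix' f
  have hfM : ∀ v, f v = M.mulVec v := by
    intro v
    rw [show M.mulVec v = Matrix.toLin' M v from (Matrix.toLin'_apply M v).symm,
      Matrix.toLin'_toMatrix']
  have hdet : M.det ≠ 0 := by
    intro h
    obtain ⟨v, hv0, hv⟩ := Matrix.exists_mulVec_eq_zero_iff.mpr h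
    exact hv0 (hf (by rw [hfM, hv, map_zero]))
  have hdetn : M.det.natAbs ≠ 0 := Int.natAbs_ne_zero.mpr hdet
  have key : ∀ z : Multiplicative (Fin n → ℤ), z ^ M.det.natAbs ∈ P := by
    intro z
    have h1 : f (M.adjugate.mulVec z.toAdd) = M.det • z.toAdd := by
      rw [hfM, Matrix.mulVec_mulVec, Matrix.mul_adjugate, Matrix.smul_mulVec,
        Matrix.one_mulVec]
    have h2 : z ^ M.det ∈ P := by
      apply hle
      refine ⟨Multiplicative.ofAdd (M.adjugate.mulVec z.toAdd), ?_⟩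
      apply Multiplicative.toAdd.injective
      have : (MonoidHom.toAdditive ψ) (M.adjugate.mulVec z.toAdd) = M.det • z.toAdd := h1
      rw [toAdd_zpow]
      exact this
    rcases Int.natAbs_eq M.det with h | h
    · have := h2
      rwa [h, zpow_natCast] at this
    · have := P.inv_mem h2
      rwa [h, ← zpow_neg, neg_neg, zpow_natCast] at this
  haveI : P.Normal := Subgroup.normal_of_comm P
  haveI : AddGroup.FG (Fin n → ℤ) := Module.Finite.iff_addGroup_fg.mp inferInstance
  haveI : Group.FG (Multiplicative (Fin n → ℤ)) := AddGroup.fg_iff_mul_fg.mp ‹_›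
  have : Finite (Multiplicative (Fin n → ℤ) ⧸ P) := by
    apply CommGroup.finite_of_fg_torsion
    intro q
    induction q using QuotientGroup.induction_on with
    | H z =>
      refine isOfFinOrder_iff_pow_eq_one.mpr ⟨M.det.natAbs, Nat.pos_of_ne_zero hdetn, ?_⟩
      rw [← QuotientGroup.mk_pow, QuotientGroup.eq_one_iff]
      exact key z
  exact Subgroup.finiteIndex_of_finite_quotient

/-- If `A` and `B` are subgroups of `G` both isomorphic to `ℤ^n` and `B` has finite index,
then `A` has finite index. -/
private lemma aux {n : ℕ} {G : Type*} [Group G] (A B : Subgroup G)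
    (eA : A ≃* Multiplicative (Fin n → ℤ)) (hB : B.FiniteIndex)
    (eB : B ≃* Multiplicative (Fin n → ℤ)) : A.FiniteIndex := by
  haveI := hB
  haveI hCfi : (B.subgroupOf A).FiniteIndex := Subgroup.instFiniteIndex_subgroupOf B A
  have hcomm : ∀ x y : ↥A, x * y = y * x := fun x y =>
    eA.injective (by rw [map_mul, map_mul, mul_comm])
  haveI : (B.subgroupOf A).Normal := ⟨fun c hc g => by
    rwa [hcomm g c, mul_assoc, mul_inv_cancel, mul_one]⟩
  set m := (B.subgroupOf A).index with hmdef
  have hm0 : m ≠ 0 := hCfi.index_ne_zero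
  have hpow : ∀ a : ↥A, a ^ m ∈ B.subgroupOf A := fun a => Subgroup.pow_index_mem _ a
  let φ : ↥A →* ↥B :=
    { toFun := fun a => ⟨((a ^ m : ↥A) : G), hpow a⟩
      map_one' := by
        apply Subtype.ext
        simp
      map_mul' := by
        intro a b
        apply Subtype.ext
        have : (a * b) ^ m = a ^ m * b ^ m := Commute.mul_pow (hcomm a b) m
        simp [this] }
  let ψ : Multiplicative (Fin n → ℤ) →* Multiplicative (Fin n → ℤ) :=
    eB.toMonoidHom.comp (φ.comp eA.symm.toMonoidHom)
  have hψ : Function.Injective ψ := by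
    rw [injective_iff_map_eq_one]
    intro z hz
    have h1 : φ (eA.symm z) = 1 := by
      apply eB.injective
      simpa [ψ] using hz
    have h2 : ((eA.symm z) ^ m : ↥A) = 1 := by
      have := congrArg (Subtype.val) h1
      exact Subtype.ext (by simpa [φ] using this)
    have h3 : z ^ m = 1 := by
      have := congrArg eA (congrArg (fun x => x) h2)
      calc z ^ m = eA ((eA.symm z) ^ m) := by rw [map_pow, MulEquiv.apply_symm_apply]
        _ = 1 := by rw [h2, map_one]
    exact zn_pow_eq_one hm0 z h3
  set P : Subgroup (Multiplicative (Fin n → ℤ)) :=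
    ((A ⊓ B).subgroupOf B).map eB.toMonoidHom with hPdef
  have hle : ψ.range ≤ P := by
    rintro w ⟨z, rfl⟩
    refine Subgroup.mem_map.mpr ⟨φ (eA.symm z), ?_, rfl⟩
    have hmemB : ((φ (eA.symm z) : ↥B) : G) ∈ B := (φ (eA.symm z)).2
    have hmemA : ((φ (eA.symm z) : ↥B) : G) ∈ A := by
      show (((eA.symm z) ^ m : ↥A) : G) ∈ A
      exact ((eA.symm z) ^ m).2
    exact Subgroup.mem_subgroupOf.mpr ⟨hmemA, hmemB⟩
  have hPfi : P.FiniteIndex := crux ψ hψ P hle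
  have hidx : P.index = ((A ⊓ B).subgroupOf B).index := by
    apply Subgroup.index_map_eq
    · exact eB.surjective
    · rw [(MonoidHom.ker_eq_bot_iff _).mpr eB.injective]
      exact bot_le
  have hrel : (A ⊓ B).relIndex B ≠ 0 := by
    rw [Subgroup.relIndex, ← hidx]
    exact hPfi.index_ne_zero
  haveI hABfi : (A ⊓ B).FiniteIndex := by
    refine ⟨?_⟩
    rw [← Subgroup.relIndex_mul_index (inf_le_right : A ⊓ B ≤ B)]
    exact Nat.mul_ne_zero hrel hB.index_ne_zero
  exact Subgroup.finiteIndex_of_le (inf_le_left : A ⊓ B ≤ A)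

/-- A group `G` is *virtually `ℤ^r`* if it contains a finite-index subgroup
isomorphic to the free abelian group `ℤ^r` (here `Fin r → ℤ`). -/
def IsVirtuallyZpow (G : Type*) [Group G] (r : ℕ) : Prop :=
  ∃ H : Subgroup G, H.FiniteIndex ∧ Nonempty (H ≃* Multiplicative (Fin r → ℤ))

/-- If `H ≤ K` are subgroups of `G` that are both virtually `ℤ^n`, then `H` has finite
index in `K`; in particular `H` and `K` are commensurable. -/
theorem finiteIndex_of_nested_virtuallyZpow (n : ℕ) (G : Type*) [Group G]
    (H K : Subgroup G) (hHK : H ≤ K)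
    (hH : IsVirtuallyZpow H n) (hK : IsVirtuallyZpow K n) :
    (H.subgroupOf K).FiniteIndex ∧ Subgroup.Commensurable H K := by
  obtain ⟨A, hAfi, ⟨eA⟩⟩ := hH
  obtain ⟨B, hBfi, ⟨eB⟩⟩ := hK
  have hA0 : A.map H.subtype ≤ K := le_trans (Subgroup.map_subtype_le A) hHK
  set A₁ : Subgroup ↥K := (A.map H.subtype).subgroupOf K with hA₁def
  have eA₁ : A₁ ≃* Multiplicative (Fin n → ℤ) :=
    (Subgroup.subgroupOfEquivOfLe hA0).trans
      ((Subgroup.equivMapOfInjective A H.subtype H.subtype_injective).symm.trans eA)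
  have h1 : A₁.FiniteIndex := aux A₁ B eA₁ hBfi eB
  have hA₁le : A₁ ≤ H.subgroupOf K :=
    Subgroup.comap_mono (Subgroup.map_subtype_le A)
  have h2 : (H.subgroupOf K).FiniteIndex := Subgroup.finiteIndex_of_le hA₁le
  refine ⟨h2, h2.index_ne_zero, ?_⟩
  rw [Subgroup.relIndex, Subgroup.subgroupOf_eq_top.mpr hHK, Subgroup.index_top]
  exact one_ne_zero
end

section
/- For every finite simple graph Γ, the right-angled Artin group A_Γ is torsion-free: if g ∈ A_Γ with g ≠ 1, then g^k ≠ 1 for every integer k ≥ 1. -/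
/-- The commutator relators of a right-angled Artin group: one commutator
`v * w * v⁻¹ * w⁻¹` for each edge `{v, w}` of `Γ`. -/
def raagRels {V : Type} (Γ : SimpleGraph V) : Set (FreeGroup V) :=
  {r | ∃ v w : V, Γ.Adj v w ∧
    r = FreeGroup.of v * FreeGroup.of w * (FreeGroup.of v)⁻¹ * (FreeGroup.of w)⁻¹}

/-- The right-angled Artin group of a (finite simple) graph `Γ`: the group presented
by the vertices of `Γ` with commutation relators for the edges. -/
abbrev RAAG {V : Type} (Γ : SimpleGraph V) : Type := PresentedGroup (raagRels Γ)

set_option linter.unusedVariables false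
set_option maxHeartbeats 1000000


open Monoid.CoprodI Monoid.PushoutI Function

namespace RaagAux

variable {ι : Type*} {G : ι → Type*} {H : Type*} [∀ i, Group (G i)] [Group H]
  {φ : ∀ i, H →* G i}

/-- letter to PushoutI -/
def F (φ : ∀ i, H →* G i) : (Σ i, G i) → Monoid.PushoutI φ := fun p => of (φ := φ) p.1 p.2

def Ok (φ : ∀ i, H →* G i) (l : List (Σ i, G i)) : Prop :=
  (∀ p ∈ l, p.2 ∉ (φ p.1).range) ∧ l.Chain' (fun a b => a.1 ≠ b.1)

theorem prod_ne_one (hφ : ∀ i, Injective (φ i)) {l : List (Σ i, G i)}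
    (hl : Ok φ l) (hne : l ≠ []) : (l.map (F φ)).prod ≠ 1 := by
  have hone : ∀ p ∈ l, p.2 ≠ 1 := fun p hp h1 => hl.1 p hp (h1 ▸ one_mem _)
  set w : Word G := ⟨l, hone, hl.2⟩ with hw
  have hred : Monoid.PushoutI.Reduced φ w := fun p hp => hl.1 p hp
  intro h1
  have hprod : ofCoprodI (φ := φ) w.prod = (l.map (F φ)).prod := by
    rw [Word.prod, map_list_prod]
    rw [List.map_map]; exact congrArg _ (List.map_congr_left fun p _ => ofCoprodI_of p.1 p.2)
  have := hred.eq_empty_of_mem_range hφ (by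
    rw [hprod, h1]; exact one_mem _)
  apply hne
  have : w.toList = Word.empty.toList := by rw [this]
  simpa [hw, Word.empty] using this

end RaagAux

namespace RaagAux

variable {ι : Type*} {G : ι → Type*} {H : Type*} [∀ i, Group (G i)] [Group H]
  {φ : ∀ i, H →* G i}

theorem ok_join {l : List (Σ i, G i)} (hl : Ok φ l)
    (hcyc : ∀ a ∈ l.getLast?, ∀ b ∈ l.head?, a.1 ≠ b.1) (n : ℕ) :
    Ok φ (List.replicate n l).flatten ∧
      ((List.replicate n l).flatten.head? = none ∨ (List.replicate n l).flatten.head? = l.head?) := by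
  induction n with
  | zero => exact ⟨⟨by simp, List.isChain_nil⟩, Or.inl rfl⟩
  | succ n ih =>
    rw [List.replicate_succ, List.flatten_cons]
    refine ⟨⟨?_, ?_⟩, ?_⟩
    · intro p hp
      rcases List.mem_append.1 hp with h | h
      · exact hl.1 p h
      · exact (ih.1).1 p h
    · rw [List.Chain', List.isChain_append]
      refine ⟨hl.2, (ih.1).2, ?_⟩
      intro a ha b hb
      rcases ih.2 with h | h
      · rw [h] at hb; cases hb
      · exact hcyc a ha b (h ▸ hb)
    · rcases eq_or_ne l [] with rfl | hne
      · simpa using ih.2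
      · right
        rw [List.head?_append_of_ne_nil _ hne]

theorem prod_join (l : List (Σ i, G i)) (n : ℕ) :
    (((List.replicate n l).flatten).map (F φ)).prod = ((l.map (F φ)).prod) ^ n := by
  induction n with
  | zero => simp
  | succ n ih =>
    rw [List.replicate_succ, List.flatten_cons, List.map_append, List.prod_append, ih, pow_succ']

theorem pow_ne_one (hφ : ∀ i, Injective (φ i)) {l : List (Σ i, G i)} (hl : Ok φ l)
    (hne : l ≠ [])
    (hcyc : ∀ a ∈ l.getLast?, ∀ b ∈ l.head?, a.1 ≠ b.1) {n : ℕ} (hn : n ≠ 0) :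
    ((l.map (F φ)).prod) ^ n ≠ 1 := by
  rw [← prod_join]
  apply prod_ne_one hφ (ok_join hl hcyc n).1
  cases n with
  | zero => exact absurd rfl hn
  | succ n =>
    rw [List.replicate_succ, List.flatten_cons]
    simp [hne]

end RaagAux

namespace RaagAux

variable {ι : Type*} {G : ι → Type*} {H : Type*} [∀ i, Group (G i)] [Group H]
  {φ : ∀ i, H →* G i}

theorem ofCoprodI_listprod (l : List (Σ i, G i)) :
    ofCoprodI (φ := φ) (List.prod (l.map fun p => Monoid.CoprodI.of p.2)) =
      (l.map (F φ)).prod := by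
  rw [map_list_prod, List.map_map]
  exact congrArg _ (List.map_congr_left fun p _ => ofCoprodI_of p.1 p.2)

theorem set_not_range {d : NormalWord.Transversal φ} {i : ι} {g : G i}
    (hg : g ∈ d.set i) (hg1 : g ≠ 1) (h : H) : φ i h * g ∉ ((φ i).range : Subgroup (G i)) := by
  intro hmem
  rcases hmem with ⟨h', hh'⟩
  have hg' : φ i (h⁻¹ * h') = g := by rw [map_mul, map_inv, hh']; group
  have huniq := (d.compl i).existsUnique g
  obtain ⟨x, -, hx⟩ := huniq
  have h1 : x = (⟨⟨φ i (h⁻¹ * h'), ⟨_, rfl⟩⟩, ⟨1, d.one_mem i⟩⟩ :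
      ((φ i).range : Set (G i)) × d.set i) := (hx _ (by simp [hg'])).symm
  have h2 : x = (⟨⟨1, one_mem _⟩, ⟨g, hg⟩⟩ : ((φ i).range : Set (G i)) × d.set i) :=
    (hx _ (by simp)).symm
  rw [h1] at h2
  apply hg1
  have := congrArg (fun y => (y.2 : G i)) h2
  simpa using this.symm

theorem exists_rep (hφ : ∀ i, Function.Injective (φ i)) (x : Monoid.PushoutI φ) :
    x ∈ (Monoid.PushoutI.base φ).range ∨
      ∃ l : List (Σ i, G i), Ok φ l ∧ l ≠ [] ∧ x = (l.map (F φ)).prod := by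
  classical
  rcases NormalWord.transversal_nonempty φ hφ with ⟨d⟩
  set w := Monoid.PushoutI.NormalWord.equiv (d := d) x with hwdef
  have hx : x = w.prod := by
    rw [hwdef]
    exact (Monoid.PushoutI.NormalWord.equiv.left_inv x).symm
  rcases hl : w.toList with _ | ⟨p, rest⟩
  · left
    rw [hx]
    refine ⟨w.head, ?_⟩
    rw [Monoid.PushoutI.NormalWord.prod]
    have : w.toWord.prod = 1 := by
      rw [Word.prod, hl]; simp
    rw [this, map_one, mul_one]
  · right
    refine ⟨⟨p.1, φ p.1 w.head * p.2⟩ :: rest, ⟨?_, ?_⟩, by simp, ?_⟩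
    · rintro q hq
      rcases List.mem_cons.1 hq with rfl | hq
      · exact set_not_range (w.normalized p.1 p.2 (by rw [hl]; exact List.mem_cons_self))
          (w.toWord.ne_one p (by rw [hl]; exact List.mem_cons_self)) _
      · have := set_not_range (w.normalized q.1 q.2 (by rw [hl]; exact List.mem_cons_of_mem _ hq))
          (w.toWord.ne_one q (by rw [hl]; exact List.mem_cons_of_mem _ hq)) 1
        simpa using this
    · have hch := w.toWord.chain_ne
      rw [hl] at hch
      rw [List.isChain_cons] at hch; rw [List.Chain', List.isChain_cons]
      exact ⟨fun y hy => hch.1 y hy, hch.2⟩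
    · rw [hx, Monoid.PushoutI.NormalWord.prod, Word.prod, hl]
      rw [List.map_cons, List.map_cons, List.prod_cons, List.prod_cons, map_mul,
        ofCoprodI_of, ofCoprodI_listprod, ← mul_assoc]
      congr 1
      rw [← Monoid.PushoutI.of_apply_eq_base φ p.1 w.head, ← map_mul]
      rfl

end RaagAux

namespace RaagAux

variable {ι : Type*} {G : ι → Type*} {H : Type*} [∀ i, Group (G i)] [Group H]
  {φ : ∀ i, H →* G i}


theorem inv_conj_pow {Gp : Type*} [Group Gp] (c x : Gp) (n : ℕ) :
    (c⁻¹ * x * c) ^ n = c⁻¹ * x ^ n * c := by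
  induction n with
  | zero => simp
  | succ n ih => rw [pow_succ, pow_succ, ih]; group

theorem conj_aux [Nonempty ι] (hφ : ∀ i, Function.Injective (φ i)) {n : ℕ} (hn : n ≠ 0) :
    ∀ N : ℕ, ∀ l : List (Σ i, G i), l.length ≤ N → Ok φ l →
      ((l.map (F φ)).prod) ^ n = 1 →
      ∃ (i : ι) (g : G i) (c : Monoid.PushoutI φ),
        (l.map (F φ)).prod = c * Monoid.PushoutI.of (φ := φ) i g * c⁻¹ := by
  intro N
  induction N with
  | zero =>
    intro l hlen _ _
    obtain rfl : l = [] := List.length_eq_zero_iff.1 (Nat.le_zero.1 hlen)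
    exact ⟨Classical.arbitrary ι, 1, 1, by simp⟩
  | succ N ih =>
    intro l hlen hOk hpow
    rcases l with _ | ⟨p, rest⟩
    · exact ⟨Classical.arbitrary ι, 1, 1, by simp⟩
    rcases List.eq_nil_or_concat rest with rfl | ⟨m, q, rfl⟩
    · exact ⟨p.1, p.2, 1, by simp [F]⟩
    obtain ⟨i, a⟩ := p
    obtain ⟨j, b⟩ := q
    simp only [List.concat_eq_append] at hlen hOk hpow ⊢
    have hch := hOk.2
    by_cases hij : j = i
    case neg =>
      exfalso
      refine pow_ne_one hφ hOk (by simp) ?_ hn hpow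
      intro x hx y hy
      rw [show (⟨i, a⟩ :: (m ++ [⟨j, b⟩]) : List (Σ i, G i)) = (⟨i, a⟩ :: m) ++ [⟨j, b⟩] from rfl,
        List.getLast?_concat] at hx
      simp only [Option.mem_def, Option.some.injEq] at hx
      rw [List.head?_cons] at hy
      simp only [Option.mem_def, Option.some.injEq] at hy
      subst hx; subst hy
      exact hij
    case pos =>
      subst hij
      -- now everything is in terms of `j`; `a b : G j`
      have hX : ((( ⟨j, a⟩ :: (m ++ [⟨j, b⟩]) : List (Σ i, G i))).map (F φ)).prod
          = F φ ⟨j, a⟩ * ((m.map (F φ)).prod * Monoid.PushoutI.of (φ := φ) j b) := by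
        rw [List.map_cons, List.prod_cons, List.map_append, List.prod_append]
        simp [F, mul_assoc]
      have hAof : F φ (⟨j, a⟩ : Σ i, G i) = Monoid.PushoutI.of (φ := φ) j a := rfl
      have hXy : ((( ⟨j, a⟩ :: (m ++ [⟨j, b⟩]) : List (Σ i, G i))).map (F φ)).prod
          = F φ ⟨j, a⟩ *
            ((m.map (F φ)).prod * Monoid.PushoutI.of (φ := φ) j (b * a)) *
            (F φ (⟨j, a⟩ : Σ i, G i))⁻¹ := by
        rw [hX, map_mul, hAof]
        group
      have hypow : ((m.map (F φ)).prod * Monoid.PushoutI.of (φ := φ) j (b * a)) ^ n = 1 := by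
        have h1 : (m.map (F φ)).prod * Monoid.PushoutI.of (φ := φ) j (b * a)
            = (F φ (⟨j, a⟩ : Σ i, G i))⁻¹ *
              ((( ⟨j, a⟩ :: (m ++ [⟨j, b⟩]) : List (Σ i, G i))).map (F φ)).prod *
              F φ (⟨j, a⟩ : Σ i, G i) := by
          rw [hXy]; group
        rw [h1, inv_conj_pow, hpow]
        simp
      have hch2 : (m ++ [(⟨j, b⟩ : Σ i, G i)]).Chain' (fun s t => s.1 ≠ t.1) :=
        (List.isChain_cons.1 hch).2
      have hchhd : ∀ y' ∈ (m ++ [(⟨j, b⟩ : Σ i, G i)]).head?, j ≠ y'.1 :=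
        (List.isChain_cons.1 hch).1
      rcases eq_or_ne m [] with rfl | hm
      · refine ⟨j, b * a, F φ (⟨j, a⟩ : Σ i, G i), ?_⟩
        rw [hXy]
        simp
      by_cases hr : b * a ∈ ((φ j).range : Subgroup (G j))
      · -- absorb into last letter of m
        rcases List.eq_nil_or_concat m with rfl | ⟨m', r, rfl⟩
        · exact absurd rfl hm
        simp only [List.concat_eq_append] at *
        rcases hr with ⟨h, hh⟩
        have hchm : (m' ++ [r]).Chain' (fun s t => s.1 ≠ t.1) :=
          (List.isChain_append.1 hch2).1
        have hOk'' : Ok φ (m' ++ [(⟨r.1, r.2 * φ r.1 h⟩ : Σ i, G i)]) := by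
          constructor
          · intro p' hp'
            rcases List.mem_append.1 hp' with hp' | hp'
            · exact hOk.1 p' (by simp [hp'])
            · simp only [List.mem_singleton] at hp'
              subst hp'
              intro hmem
              have hr2 : r.2 ∈ ((φ r.1).range : Subgroup (G r.1)) := by
                have hmem' : φ r.1 h ∈ (φ r.1).range := ⟨h, rfl⟩
                exact (mul_mem_cancel_right hmem').1 hmem
              exact hOk.1 r (by simp) hr2
          · rw [List.Chain', List.isChain_append]
            refine ⟨(List.isChain_append.1 hchm).1, List.isChain_singleton _, ?_⟩
            intro x hx y' hy'
            simp only [List.head?_cons, Option.mem_def, Option.some.injEq] at hy'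
            subst hy'
            exact (List.isChain_append.1 hchm).2.2 x hx r (by simp)
        have hlen'' : (m' ++ [(⟨r.1, r.2 * φ r.1 h⟩ : Σ i, G i)]).length ≤ N := by
          simp only [List.length_append, List.length_cons, List.length_singleton,
            List.length_nil] at hlen ⊢
          omega
        have hyprod : (((m' ++ [r]).map (F φ)).prod * Monoid.PushoutI.of (φ := φ) j (b * a))
            = ((m' ++ [(⟨r.1, r.2 * φ r.1 h⟩ : Σ i, G i)]).map (F φ)).prod := by
          rw [List.map_append, List.prod_append, List.map_append, List.prod_append]
          simp only [List.map_singleton, List.prod_singleton]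
          rw [mul_assoc]
          congr 1
          show F φ r * Monoid.PushoutI.of (φ := φ) j (b * a) = F φ ⟨r.1, r.2 * φ r.1 h⟩
          rw [← hh, Monoid.PushoutI.of_apply_eq_base φ j h,
            ← Monoid.PushoutI.of_apply_eq_base φ r.1 h]
          show Monoid.PushoutI.of (φ := φ) r.1 r.2 *
            Monoid.PushoutI.of (φ := φ) r.1 (φ r.1 h) = _
          rw [← map_mul]
          rfl
        obtain ⟨i₀, g₀, c₀, hc⟩ := ih (m' ++ [(⟨r.1, r.2 * φ r.1 h⟩ : Σ i, G i)]) hlen'' hOk''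
          (by rw [← hyprod]; exact hypow)
        refine ⟨i₀, g₀, F φ (⟨j, a⟩ : Σ i, G i) * c₀, ?_⟩
        rw [hXy, hyprod, hc]
        group
      · -- cyclically reduced long word: contradiction
        exfalso
        have hOk' : Ok φ (m ++ [(⟨j, b * a⟩ : Σ i, G i)]) := by
          constructor
          · intro p' hp'
            rcases List.mem_append.1 hp' with hp' | hp'
            · exact hOk.1 p' (by simp [hp'])
            · simp only [List.mem_singleton] at hp'
              subst hp'
              exact hr
          · rw [List.Chain', List.isChain_append]
            refine ⟨(List.isChain_append.1 hch2).1, List.isChain_singleton _, ?_⟩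
            intro x hx y' hy'
            simp only [List.head?_cons, Option.mem_def, Option.some.injEq] at hy'
            subst hy'
            exact (List.isChain_append.1 hch2).2.2 x hx ⟨j, b⟩ (by simp)
        have hcyc : ∀ x ∈ (m ++ [(⟨j, b * a⟩ : Σ i, G i)]).getLast?,
            ∀ y' ∈ (m ++ [(⟨j, b * a⟩ : Σ i, G i)]).head?, x.1 ≠ y'.1 := by
          intro x hx y' hy'
          rw [List.getLast?_concat] at hx
          simp only [Option.mem_def, Option.some.injEq] at hx
          subst hx
          rw [List.head?_append_of_ne_nil _ hm] at hy'
          exact hchhd y' (by rw [List.head?_append_of_ne_nil _ hm]; exact hy')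
        refine pow_ne_one hφ hOk' (by simp) hcyc hn ?_
        rw [List.map_append, List.prod_append]
        simpa [F] using hypow

theorem conj_of_pow_eq_one [Nonempty ι] (hφ : ∀ i, Function.Injective (φ i))
    {x : Monoid.PushoutI φ} {n : ℕ} (hn : n ≠ 0) (hx : x ^ n = 1) :
    ∃ (i : ι) (g : G i) (c : Monoid.PushoutI φ),
      x = c * Monoid.PushoutI.of (φ := φ) i g * c⁻¹ := by
  rcases exists_rep hφ x with ⟨h, rfl⟩ | ⟨l, hOk, hne, rfl⟩
  · exact ⟨Classical.arbitrary ι, φ _ h, 1,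
      by rw [Monoid.PushoutI.of_apply_eq_base]; simp⟩
  · exact conj_aux hφ hn l.length l le_rfl hOk hx

end RaagAux

namespace RaagAux

variable {V : Type} {Γ : SimpleGraph V}

theorem raag_rel {a b : V} (h : Γ.Adj a b) :
    Commute (PresentedGroup.of (rels := raagRels Γ) a) (PresentedGroup.of b) := by
  have hmem : (FreeGroup.of a * FreeGroup.of b * (FreeGroup.of a)⁻¹ * (FreeGroup.of b)⁻¹)
      ∈ Subgroup.normalClosure (raagRels Γ) :=
    Subgroup.subset_normalClosure ⟨a, b, h, rfl⟩
  have h1 : (PresentedGroup.mk (raagRels Γ))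
      (FreeGroup.of a * FreeGroup.of b * (FreeGroup.of a)⁻¹ * (FreeGroup.of b)⁻¹) = 1 :=
    (QuotientGroup.eq_one_iff _).2 hmem
  rw [← commutatorElement_eq_one_iff_commute, commutatorElement_def]
  simpa [map_mul, map_inv, PresentedGroup.of] using h1

/-- Universal property of RAAGs: a vertex map with commuting adjacent images extends. -/
def raagLift {G : Type*} [Group G] (f : V → G)
    (hf : ∀ a b, Γ.Adj a b → Commute (f a) (f b)) : RAAG Γ →* G :=
  PresentedGroup.toGroup (f := f) (by
    rintro r ⟨a, b, hab, rfl⟩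
    simp only [map_mul, map_inv, FreeGroup.lift_apply_of]
    rw [← commutatorElement_def]
    exact commutatorElement_eq_one_iff_commute.2 (hf a b hab))

@[simp] theorem raagLift_of {G : Type*} [Group G] (f : V → G)
    (hf : ∀ a b, Γ.Adj a b → Commute (f a) (f b)) (x : V) :
    raagLift f hf (PresentedGroup.of x) = f x :=
  PresentedGroup.toGroup.of _

section Decomp

open scoped Classical

/-- Link vertices. -/
abbrev LV (Γ : SimpleGraph V) (v : V) : Type := {u : V // Γ.Adj u v}
/-- Deleted vertices. -/
abbrev DV (Γ : SimpleGraph V) (v : V) : Type := {u : V // u ≠ v}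

abbrev ΓL (Γ : SimpleGraph V) (v : V) : SimpleGraph (LV Γ v) := SimpleGraph.comap Subtype.val Γ
abbrev Γd (Γ : SimpleGraph V) (v : V) : SimpleGraph (DV Γ v) := SimpleGraph.comap Subtype.val Γ

abbrev HL (Γ : SimpleGraph V) (v : V) : Type := RAAG (ΓL Γ v)
abbrev Gdel (Γ : SimpleGraph V) (v : V) : Type := RAAG (Γd Γ v)
abbrev Gstar (Γ : SimpleGraph V) (v : V) : Type := HL Γ v × Multiplicative ℤ

variable (Γ : SimpleGraph V) (v : V)

def Gfam (Γ : SimpleGraph V) (v : V) : Bool → Type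
  | true => Gdel Γ v
  | false => Gstar Γ v

instance GfamGroup : ∀ b, Group (Gfam Γ v b)
  | true => inferInstanceAs (Group (Gdel Γ v))
  | false => inferInstanceAs (Group (Gstar Γ v))

/-- The inclusion of the link RAAG into the deleted-vertex RAAG. -/
def φ1 : HL Γ v →* Gdel Γ v :=
  raagLift (fun u => PresentedGroup.of ⟨u.1, Γ.ne_of_adj u.2⟩)
    (fun a b hab => raag_rel hab)

/-- The retraction of the deleted-vertex RAAG onto the link RAAG. -/
noncomputable def retr : Gdel Γ v →* HL Γ v :=
  raagLift (fun u => if h : Γ.Adj u.1 v then PresentedGroup.of (⟨u.1, h⟩ : LV Γ v) else 1)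
    (fun a b hab => by
      by_cases ha : Γ.Adj a.1 v <;> by_cases hb : Γ.Adj b.1 v <;>
        simp only [ha, hb, dif_pos, dif_neg, not_false_iff]
      · exact raag_rel hab
      · exact Commute.one_right _
      · exact Commute.one_left _
      · exact Commute.one_right _)

theorem φ1_injective : Function.Injective (φ1 Γ v) := by
  have hcomp : (retr Γ v).comp (φ1 Γ v) = MonoidHom.id _ := by
    apply PresentedGroup.ext
    intro u
    simp only [MonoidHom.comp_apply, MonoidHom.id_apply, φ1, retr, raagLift_of]
    rw [dif_pos u.2]
  intro x y h
  have h1 := DFunLike.congr_fun hcomp x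
  have h2 := DFunLike.congr_fun hcomp y
  simp only [MonoidHom.comp_apply, MonoidHom.id_apply] at h1 h2
  rw [← h1, ← h2, h]

def φmap : ∀ b, HL Γ v →* Gfam Γ v b
  | true => φ1 Γ v
  | false => MonoidHom.inl (HL Γ v) (Multiplicative ℤ)

theorem φmap_injective : ∀ b, Function.Injective (φmap Γ v b)
  | true => φ1_injective Γ v
  | false => fun x y h => congrArg Prod.fst h

abbrev P := Monoid.PushoutI (φmap Γ v)

/-- The map from the RAAG to the amalgam. -/
noncomputable def fwd : RAAG Γ →* P Γ v :=
  raagLift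
    (fun u =>
      if h : u = v then
        Monoid.PushoutI.of (φ := φmap Γ v) false ((1, Multiplicative.ofAdd (1 : ℤ)) : Gstar Γ v)
      else Monoid.PushoutI.of (φ := φmap Γ v) true
        (PresentedGroup.of (⟨u, h⟩ : DV Γ v) : Gdel Γ v))
    (by
      have key : ∀ a : V, ∀ hav : Γ.Adj a v,
          Commute
            (Monoid.PushoutI.of (φ := φmap Γ v) true
              (PresentedGroup.of (⟨a, Γ.ne_of_adj hav⟩ : DV Γ v) : Gdel Γ v))
            (Monoid.PushoutI.of (φ := φmap Γ v) false
              ((1, Multiplicative.ofAdd (1 : ℤ)) : Gstar Γ v)) := by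
        intro a hav
        have h1 : (PresentedGroup.of (⟨a, Γ.ne_of_adj hav⟩ : DV Γ v) : Gdel Γ v)
            = φmap Γ v true (PresentedGroup.of (⟨a, hav⟩ : LV Γ v)) := by
          show _ = φ1 Γ v _
          rw [φ1, raagLift_of]
        rw [h1, Monoid.PushoutI.of_apply_eq_base (φmap Γ v) true,
          ← Monoid.PushoutI.of_apply_eq_base (φmap Γ v) false]
        have hcomm : Commute ((PresentedGroup.of (⟨a, hav⟩ : LV Γ v), 1) : Gstar Γ v)
            ((1, Multiplicative.ofAdd (1 : ℤ)) : Gstar Γ v) := by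
          simp [commute_iff_eq, Prod.ext_iff]
        exact hcomm.map (Monoid.PushoutI.of (φ := φmap Γ v) false)
      intro a b hab
      beta_reduce
      by_cases ha : a = v
      · have hb : b ≠ v := fun h => ((ha ▸ h ▸ hab).ne rfl)
        rw [dif_pos ha, dif_neg hb]
        have hav : Γ.Adj b v := ha ▸ hab.symm
        have heq : (⟨b, hb⟩ : DV Γ v) = ⟨b, Γ.ne_of_adj hav⟩ := rfl
        rw [heq]
        exact (key b hav).symm
      · by_cases hb : b = v
        · rw [dif_pos hb, dif_neg ha]
          have hav : Γ.Adj a v := hb ▸ hab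
          have heq : (⟨a, ha⟩ : DV Γ v) = ⟨a, Γ.ne_of_adj hav⟩ := rfl
          rw [heq]
          exact key a hav
        · rw [dif_neg ha, dif_neg hb]
          exact Commute.map (raag_rel (show (Γd Γ v).Adj ⟨a, ha⟩ ⟨b, hb⟩ from hab)) _)

def kL : HL Γ v →* RAAG Γ :=
  raagLift (fun u => PresentedGroup.of u.1) (fun a b hab => raag_rel hab)

def k1 : Gdel Γ v →* RAAG Γ :=
  raagLift (fun u => PresentedGroup.of u.1) (fun a b hab => raag_rel hab)

theorem kL_comm (h : HL Γ v) :
    Commute (kL Γ v h) (PresentedGroup.of (rels := raagRels Γ) v) := by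
  have : kL Γ v h ∈ Subgroup.centralizer {PresentedGroup.of (rels := raagRels Γ) v} := by
    refine PresentedGroup.generated_by _
      (Subgroup.comap (kL Γ v) (Subgroup.centralizer {PresentedGroup.of (rels := raagRels Γ) v}))
      ?_ h
    intro u
    rw [Subgroup.mem_comap, Subgroup.mem_centralizer_iff]
    rintro g hg
    rw [Set.mem_singleton_iff] at hg
    subst hg
    rw [kL, raagLift_of]
    exact (raag_rel u.2).symm
  rw [Subgroup.mem_centralizer_iff] at this
  exact (this _ (Set.mem_singleton _)).symm

def k2 : Gstar Γ v →* RAAG Γ :=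
  MonoidHom.noncommCoprod (kL Γ v) (zpowersHom _ (PresentedGroup.of v))
    (fun h z => by
      simp only [zpowersHom_apply]
      exact (kL_comm Γ v h).zpow_right _)

def kfam : ∀ b, Gfam Γ v b →* RAAG Γ
  | true => k1 Γ v
  | false => k2 Γ v

theorem kfam_comp : ∀ b, (kfam Γ v b).comp (φmap Γ v b) = kL Γ v
  | true => by
    apply PresentedGroup.ext
    intro u
    show k1 Γ v (φ1 Γ v (PresentedGroup.of u)) = kL Γ v (PresentedGroup.of u)
    rw [φ1, raagLift_of, k1, raagLift_of, kL, raagLift_of]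
  | false => by
    apply PresentedGroup.ext
    intro u
    show k2 Γ v (MonoidHom.inl _ _ (PresentedGroup.of u)) = kL Γ v (PresentedGroup.of u)
    rw [k2, MonoidHom.noncommCoprod_apply]
    simp

def bwd : P Γ v →* RAAG Γ :=
  Monoid.PushoutI.lift (kfam Γ v) (kL Γ v) (kfam_comp Γ v)

theorem bwd_fwd (x : RAAG Γ) : bwd Γ v (fwd Γ v x) = x := by
  have hcomp : (bwd Γ v).comp (fwd Γ v) = MonoidHom.id _ := by
    apply PresentedGroup.ext
    intro u
    simp only [MonoidHom.comp_apply, MonoidHom.id_apply, fwd, raagLift_of]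
    by_cases h : u = v
    · rw [dif_pos h, bwd]; erw [Monoid.PushoutI.lift_of]
      show k2 Γ v _ = _
      rw [k2, MonoidHom.noncommCoprod_apply]
      simp [kL, h]
    · rw [dif_neg h, bwd]; erw [Monoid.PushoutI.lift_of]
      show k1 Γ v _ = _
      rw [k1, raagLift_of]
  exact DFunLike.congr_fun hcomp x

end Decomp

end RaagAux

namespace RaagAux

theorem tf_aux : ∀ n : ℕ, ∀ (V : Type) (inst : Fintype V) (Γ : SimpleGraph V),
    Fintype.card V ≤ n → ∀ (g : RAAG Γ) (m : ℕ), m ≠ 0 → g ^ m = 1 → g = 1 := by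
  intro n
  induction n with
  | zero =>
    intro V inst Γ hcard g m hm hgm
    haveI : IsEmpty V := Fintype.card_eq_zero_iff.1 (Nat.le_zero.1 hcard)
    obtain ⟨z, rfl⟩ := PresentedGroup.mk_surjective (raagRels Γ) g
    rw [Subsingleton.elim z 1, map_one]
  | succ n ih =>
    intro V inst Γ hcard g m hm hgm
    classical
    rcases Nat.lt_or_ge (Fintype.card V) (n + 1) with hlt | hge
    · exact ih V inst Γ (Nat.lt_succ_iff.1 hlt) g m hm hgm
    · have hne : Nonempty V := Fintype.card_pos_iff.1 (by omega)
      obtain ⟨v⟩ := hne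
      have hx : (fwd Γ v g) ^ m = 1 := by rw [← map_pow, hgm, map_one]
      obtain ⟨b, y, c, hc⟩ := conj_of_pow_eq_one (φmap_injective Γ v) hm hx
      have hofy : (Monoid.PushoutI.of (φ := φmap Γ v) b y) ^ m = 1 := by
        have h1 : (c * Monoid.PushoutI.of (φ := φmap Γ v) b y * c⁻¹) ^ m = 1 := by
          rw [← hc]; exact hx
        rw [conj_pow] at h1
        have h2 := congrArg (fun t => c⁻¹ * t * c) h1
        simpa [mul_assoc] using h2
      have hym : y ^ m = 1 := by
        apply Monoid.PushoutI.of_injective (φmap_injective Γ v) b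
        rw [map_pow, hofy, map_one]
      have hy1 : y = 1 := by
        cases b with
        | true =>
          have hcard' : Fintype.card (DV Γ v) ≤ n := by
            have hlt2 : Fintype.card (DV Γ v) < Fintype.card V := by
              calc Fintype.card (DV Γ v) = _ := Fintype.card_congr (Equiv.refl _)
                _ < Fintype.card V :=
                  Fintype.card_subtype_lt (p := fun u => u ≠ v) (x := v) (by simp)
            omega
          exact ih (DV Γ v) _ (Γd Γ v) hcard' y m hm hym
        | false =>
          obtain ⟨y1, y2⟩ := y
          have hfst : y1 ^ m = 1 := by
            have := congrArg Prod.fst hym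
            exact this
          have hsnd : y2 ^ m = 1 := by
            have := congrArg Prod.snd hym
            exact this
          have hcard' : Fintype.card (LV Γ v) ≤ n := by
            have hlt2 : Fintype.card (LV Γ v) < Fintype.card V := by
              calc Fintype.card (LV Γ v) = _ := Fintype.card_congr (Equiv.refl _)
                _ < Fintype.card V :=
                  Fintype.card_subtype_lt (p := fun u => Γ.Adj u v) (x := v) (by simp)
            omega
          have h1 : y1 = 1 := ih (LV Γ v) _ (ΓL Γ v) hcard' y1 m hm hfst
          have h2 : y2 = 1 := by
            have hz := congrArg Multiplicative.toAdd hsnd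
            rw [toAdd_pow, toAdd_one] at hz
            have hzz : (m : ℤ) * Multiplicative.toAdd y2 = 0 := by
              rw [← nsmul_eq_mul]
              exact_mod_cast hz
            rcases mul_eq_zero.1 hzz with h | h
            · exact absurd (by exact_mod_cast h) hm
            · have : Multiplicative.toAdd y2 = 0 := h
              have := congrArg Multiplicative.ofAdd this
              simpa using this
          show (y1, y2) = (1 : Gstar Γ v)
          rw [h1, h2]
          rfl
      have hfwd1 : fwd Γ v g = 1 := by
        rw [hc, hy1, map_one, mul_one, mul_inv_cancel]
      have hfin := congrArg (bwd Γ v) hfwd1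
      rwa [bwd_fwd, map_one] at hfin

end RaagAux

/-- Right-angled Artin groups are torsion-free: if `g ≠ 1` in `A_Γ`, then `g ^ k ≠ 1`
for every integer `k ≥ 1`. -/
theorem raag_torsionFree {V : Type} [Fintype V] (Γ : SimpleGraph V)
    (g : RAAG Γ) (hg : g ≠ 1) (k : ℤ) (hk : 1 ≤ k) :
    g ^ k ≠ 1 := by
  intro hk1
  apply hg
  have hm : k.toNat ≠ 0 := by omega
  have hpow : g ^ k.toNat = 1 := by
    rw [← zpow_natCast, Int.toNat_of_nonneg (by omega)]
    exact hk1
  exact RaagAux.tf_aux (Fintype.card V) V inferInstance Γ le_rfl g k.toNat hm hpow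
end

section
/- Let Γ be a finite simple graph with clique number m (the largest size of a set of pairwise adjacent vertices). Then the group cohomology of A_Γ in degree m with coefficients in ℤ with the trivial A_Γ-action is nonzero: H^m(A_Γ; ℤ) ≠ 0. (Together with the vanishing of H^k(A_Γ; M) for all k > m and all coefficient modules M, this says that the cohomological dimension of A_Γ equals the clique number of Γ, which equals the dimension of the Salvetti complex S_Γ.) -/
namespace RaagProof

open Finset

open scoped commutatorElement

variable {V : Type} {Γ : SimpleGraph V}

lemma of_comm {v w : V} (h : Γ.Adj v w) :
    (PresentedGroup.of v : RAAG Γ) * PresentedGroup.of w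
      = PresentedGroup.of w * PresentedGroup.of v := by
  have hmem : FreeGroup.of v * FreeGroup.of w * (FreeGroup.of v)⁻¹ * (FreeGroup.of w)⁻¹
      ∈ Subgroup.normalClosure (raagRels Γ) :=
    Subgroup.subset_normalClosure ⟨v, w, h, rfl⟩
  have h1 : (PresentedGroup.mk (raagRels Γ))
      (FreeGroup.of v * FreeGroup.of w * (FreeGroup.of v)⁻¹ * (FreeGroup.of w)⁻¹) = 1 :=
    (QuotientGroup.eq_one_iff _).2 hmem
  simp only [map_mul, map_inv] at h1
  have h2 : ⁅(PresentedGroup.of v : RAAG Γ), (PresentedGroup.of w : RAAG Γ)⁆ = 1 := by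
    rw [commutatorElement_def]
    exact h1
  exact commutatorElement_eq_one_iff_mul_comm.1 h2

open Classical in
noncomputable def ind (u w : V) : ℤ := if w = u then 1 else 0

lemma ind_self (u : V) : ind u u = 1 := by
  rw [ind, if_pos rfl]

lemma ind_ne (u w : V) (h : w ≠ u) : ind u w = 0 := by
  rw [ind, if_neg h]

noncomputable def chi (Γ : SimpleGraph V) (u : V) : RAAG Γ →* Multiplicative ℤ :=
  PresentedGroup.toGroup (f := fun w => Multiplicative.ofAdd (ind u w))
    (by
      rintro r ⟨v, w, -, rfl⟩
      simp only [map_mul, map_inv, FreeGroup.lift_apply_of]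
      rw [mul_comm (Multiplicative.ofAdd (ind u v))]
      group)

noncomputable def phi (Γ : SimpleGraph V) (u : V) (x : RAAG Γ) : ℤ :=
  Multiplicative.toAdd (chi Γ u x)

lemma phi_mul (u : V) (x y : RAAG Γ) : phi Γ u (x * y) = phi Γ u x + phi Γ u y := by
  simp [phi, map_mul]

lemma phi_of (u w : V) : phi Γ u (PresentedGroup.of w) = ind u w := by
  simp [phi, chi]



noncomputable def cup (Γ : SimpleGraph V) {m : ℕ} (vtx : Fin m → V)
    (g : Fin m → RAAG Γ) : ℤ :=
  ∏ i, phi Γ (vtx i) (g i)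

lemma cup_cocycle {m : ℕ} (vtx : Fin m → V) (g : Fin (m + 1) → RAAG Γ) :
    cup Γ vtx (fun i => g i.succ)
      + ∑ j : Fin (m + 1), (-1 : ℤ) ^ ((j : ℕ) + 1) •
          cup Γ vtx (Fin.contractNth j (· * ·) g) = 0 := by
  set AA : ℕ → ℤ :=
    fun t => ∏ i : Fin m, phi Γ (vtx i) (if (i : ℕ) < t then g i.castSucc else g i.succ)
    with hAA
  have hA0 : cup Γ vtx (fun i => g i.succ) = AA 0 := by
    refine Finset.prod_congr rfl fun i _ => ?_
    rw [if_neg (Nat.not_lt_zero _)]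
  have hcontract : ∀ j : Fin (m + 1), ((j : ℕ) < m) →
      cup Γ vtx (Fin.contractNth j (· * ·) g) = AA (j : ℕ) + AA ((j : ℕ) + 1) := by
    intro j hj
    set p : Fin m := ⟨(j : ℕ), hj⟩ with hp
    have hps : ((p : ℕ) : ℕ) = (j : ℕ) := rfl
    have hRcongr : ∀ i ∈ univ.erase p, ∀ t : ℕ, (t = (j:ℕ) ∨ t = (j:ℕ) + 1) →
        phi Γ (vtx i) (if (i : ℕ) < t then g i.castSucc else g i.succ)
          = phi Γ (vtx i) (Fin.contractNth j (· * ·) g i) := by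
      intro i hi t ht
      have hip : i ≠ p := (Finset.mem_erase.1 hi).1
      rcases lt_trichotomy (i : ℕ) (j : ℕ) with hlt | heq | hgt
      · rw [Fin.contractNth_apply_of_lt _ _ _ _ hlt]
        rcases ht with rfl | rfl
        · rw [if_pos hlt]
        · rw [if_pos (Nat.lt_succ_of_lt hlt)]
      · exact absurd (Fin.ext heq : i = p) hip
      · rw [Fin.contractNth_apply_of_gt _ _ _ _ hgt]
        rcases ht with rfl | rfl
        · rw [if_neg (by omega)]
        · rw [if_neg (by omega)]
    have hsplit : ∀ (F : Fin m → ℤ), ∏ i, F i = F p * ∏ i ∈ univ.erase p, F i :=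
      fun F => (Finset.mul_prod_erase _ _ (mem_univ p)).symm
    rw [cup, hsplit]
    simp only [hAA]
    rw [show (∏ i : Fin m,
        phi Γ (vtx i) (if (i:ℕ) < (j:ℕ) then g i.castSucc else g i.succ)) =
        phi Γ (vtx p) (if (p:ℕ) < (j:ℕ) then g p.castSucc else g p.succ)
          * ∏ i ∈ univ.erase p,
            phi Γ (vtx i) (if (i:ℕ) < (j:ℕ) then g i.castSucc else g i.succ) from hsplit _]
    rw [show (∏ i : Fin m,
        phi Γ (vtx i) (if (i:ℕ) < (j:ℕ)+1 then g i.castSucc else g i.succ)) =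
        phi Γ (vtx p) (if (p:ℕ) < (j:ℕ)+1 then g p.castSucc else g p.succ)
          * ∏ i ∈ univ.erase p,
            phi Γ (vtx i) (if (i:ℕ) < (j:ℕ)+1 then g i.castSucc else g i.succ) from hsplit _]
    rw [Finset.prod_congr rfl (fun i hi => hRcongr i hi (j:ℕ) (Or.inl rfl)),
        Finset.prod_congr rfl (fun i hi => hRcongr i hi ((j:ℕ)+1) (Or.inr rfl))]
    rw [Fin.contractNth_apply_of_eq _ _ _ _ hps]
    rw [if_neg (lt_irrefl _), if_pos (Nat.lt_succ_self _)]
    rw [phi_mul]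
    ring
  have hlast : ∀ j : Fin (m + 1), ((j : ℕ) = m) →
      cup Γ vtx (Fin.contractNth j (· * ·) g) = AA m := by
    intro j hj
    refine Finset.prod_congr rfl fun i _ => ?_
    rw [Fin.contractNth_apply_of_lt _ _ _ _ (by omega : (i:ℕ) < (j:ℕ)), if_pos i.isLt]
  have hFF : ∀ t : ℕ, ((-1 : ℤ) ^ (t + 1)) • (AA t + AA (t + 1))
      = (fun u => (-1 : ℤ) ^ (u + 1) * AA u) t - (fun u => (-1 : ℤ) ^ (u + 1) * AA u) (t + 1) := by
    intro t
    simp only [smul_eq_mul, pow_succ]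
    ring
  have hsum1 : ∑ j : Fin m, ((-1 : ℤ) ^ ((j.castSucc : ℕ) + 1)) •
        cup Γ vtx (Fin.contractNth j.castSucc (· * ·) g)
      = (fun u => (-1 : ℤ) ^ (u + 1) * AA u) 0 - (fun u => (-1 : ℤ) ^ (u + 1) * AA u) m := by
    rw [Finset.sum_congr rfl (fun j _ => by
      rw [hcontract j.castSucc (by simp : ((j.castSucc : Fin (m+1)) : ℕ) < m),
        Fin.coe_castSucc, hFF (j : ℕ)])]
    rw [Fin.sum_univ_eq_sum_range
      (fun t => (fun u => (-1 : ℤ) ^ (u + 1) * AA u) t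
        - (fun u => (-1 : ℤ) ^ (u + 1) * AA u) (t + 1)) m]
    exact Finset.sum_range_sub' (fun u => (-1 : ℤ) ^ (u + 1) * AA u) m
  rw [hA0, Fin.sum_univ_castSucc, hsum1, hlast (Fin.last m) (Fin.val_last m)]
  simp only [Fin.val_last, smul_eq_mul, pow_succ, pow_zero]
  ring

/-- The tuple of generators indexed by a permutation. -/
noncomputable def ptuple (Γ : SimpleGraph V) {m : ℕ} (vtx : Fin m → V)
    (σ : Equiv.Perm (Fin m)) : Fin m → RAAG Γ :=
  fun i => PresentedGroup.of (vtx (σ i))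

lemma ptuple_apply (Γ : SimpleGraph V) {m : ℕ} (vtx : Fin m → V)
    (σ : Equiv.Perm (Fin m)) (i : Fin m) :
    ptuple Γ vtx σ i = PresentedGroup.of (vtx (σ i)) := rfl

noncomputable def ev (Γ : SimpleGraph V) {m : ℕ} (vtx : Fin m → V)
    (h : (Fin m → RAAG Γ) → ℤ) : ℤ :=
  ∑ σ : Equiv.Perm (Fin m), ((Equiv.Perm.sign σ : ℤˣ) : ℤ) * h (ptuple Γ vtx σ)

lemma ev_cup {m : ℕ} (vtx : Fin m → V) (hinj : Function.Injective vtx) :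
    ev Γ vtx (cup Γ vtx) = 1 := by
  rw [ev, Finset.sum_eq_single 1]
  · have : cup Γ vtx (ptuple Γ vtx 1) = 1 := by
      rw [cup]
      refine Finset.prod_eq_one fun i _ => ?_
      rw [ptuple_apply, phi_of]
      exact ind_self _
    rw [this]
    simp
  · intro σ _ hσ
    obtain ⟨i, hi⟩ : ∃ i, σ i ≠ i := by
      by_contra hc
      push_neg at hc
      exact hσ (Equiv.ext hc)
    have : cup Γ vtx (ptuple Γ vtx σ) = 0 := by
      refine Finset.prod_eq_zero (Finset.mem_univ i) ?_
      rw [ptuple_apply, phi_of]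
      exact ind_ne _ _ fun hh => hi (hinj hh)
    rw [this, mul_zero]
  · intro h
    exact absurd (Finset.mem_univ 1) h

lemma ev_d {n : ℕ} (vtx : Fin (n + 1) → V) (hinj : Function.Injective vtx)
    (hadj : ∀ i j : Fin (n + 1), i ≠ j → Γ.Adj (vtx i) (vtx j))
    (g' : (Fin n → RAAG Γ) → ℤ) :
    ev Γ vtx (fun gg => g' (fun i => gg i.succ)
      + ∑ j : Fin (n + 1), (-1 : ℤ) ^ ((j : ℕ) + 1) •
          g' (Fin.contractNth j (· * ·) gg)) = 0 := by
  rw [ev]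
  simp only [mul_add, Finset.sum_add_distrib, Finset.mul_sum]
  rw [Finset.sum_comm]
  -- inner faces vanish
  have hinner : ∀ j : Fin n, ∑ σ : Equiv.Perm (Fin (n + 1)),
      ((Equiv.Perm.sign σ : ℤˣ) : ℤ)
        * ((-1 : ℤ) ^ (((j.castSucc : Fin (n+1)) : ℕ) + 1) •
            g' (Fin.contractNth j.castSucc (· * ·) (ptuple Γ vtx σ))) = 0 := by
    intro j
    set p : Fin (n + 1) := ⟨(j : ℕ), by omega⟩ with hp
    set q : Fin (n + 1) := ⟨(j : ℕ) + 1, by omega⟩ with hq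
    have hpv : (p : ℕ) = (j : ℕ) := rfl
    have hqv : (q : ℕ) = (j : ℕ) + 1 := rfl
    have hpq : p ≠ q := by
      intro hh
      have := congrArg Fin.val hh
      rw [hpv, hqv] at this
      omega
    refine Finset.sum_ninvolution (fun σ => σ * Equiv.swap p q) ?_ ?_
      (fun _ => Finset.mem_univ _) ?_
    · intro σ
      have hsign : ((Equiv.Perm.sign (σ * Equiv.swap p q) : ℤˣ) : ℤ)
          = -((Equiv.Perm.sign σ : ℤˣ) : ℤ) := by
        rw [map_mul, Equiv.Perm.sign_swap hpq]
        simp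
      have hcontr : Fin.contractNth j.castSucc (· * ·) (ptuple Γ vtx (σ * Equiv.swap p q))
          = Fin.contractNth j.castSucc (· * ·) (ptuple Γ vtx σ) := by
        funext k
        rcases lt_trichotomy (k : ℕ) (j : ℕ) with hlt | heq | hgt
        · rw [Fin.contractNth_apply_of_lt _ _ _ _ (by simpa using hlt),
            Fin.contractNth_apply_of_lt _ _ _ _ (by simpa using hlt)]
          have h1 : Equiv.swap p q k.castSucc = k.castSucc := by
            apply Equiv.swap_apply_of_ne_of_ne
            · exact Fin.ne_of_val_ne (by rw [hpv, Fin.coe_castSucc]; omega)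
            · exact Fin.ne_of_val_ne (by rw [hqv, Fin.coe_castSucc]; omega)
          simp only [ptuple, Equiv.Perm.mul_apply, h1]
        · rw [Fin.contractNth_apply_of_eq _ _ _ _ (by simpa using heq),
            Fin.contractNth_apply_of_eq _ _ _ _ (by simpa using heq)]
          have hkp : k.castSucc = p := Fin.ext (by rw [hpv, Fin.coe_castSucc]; omega)
          have hkq : k.succ = q := Fin.ext (by rw [hqv, Fin.val_succ]; omega)
          simp only [ptuple, Equiv.Perm.mul_apply, hkp, hkq,
            Equiv.swap_apply_left, Equiv.swap_apply_right]
          exact of_comm (hadj (σ q) (σ p)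
            (fun hh => hpq ((σ.injective hh).symm)))
        · rw [Fin.contractNth_apply_of_gt _ _ _ _ (by simpa using hgt),
            Fin.contractNth_apply_of_gt _ _ _ _ (by simpa using hgt)]
          have h1 : Equiv.swap p q k.succ = k.succ := by
            apply Equiv.swap_apply_of_ne_of_ne
            · exact Fin.ne_of_val_ne (by rw [hpv, Fin.val_succ]; omega)
            · exact Fin.ne_of_val_ne (by rw [hqv, Fin.val_succ]; omega)
          simp only [ptuple, Equiv.Perm.mul_apply, h1]
      rw [hsign, hcontr]
      ring
    · intro σ _ hcon
      have h1 : Equiv.swap p q = 1 := mul_left_cancel (a := σ) (by rw [mul_one]; exact hcon)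
      have h2 : q = p := by
        have := Equiv.swap_apply_left p q
        rw [h1] at this
        simpa using this.symm
      exact hpq h2.symm
    · intro σ
      show σ * Equiv.swap p q * Equiv.swap p q = σ
      rw [mul_assoc, Equiv.swap_mul_self, mul_one]
  rw [Fin.sum_univ_castSucc]
  rw [Finset.sum_congr rfl (fun j _ => hinner j), Finset.sum_const_zero, zero_add]
  -- last face
  have hlastface : ∀ σ : Equiv.Perm (Fin (n+1)),
      Fin.contractNth (Fin.last n) (· * ·) (ptuple Γ vtx σ)
        = fun k : Fin n => ptuple Γ vtx σ k.castSucc := by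
    intro σ
    funext k
    exact Fin.contractNth_apply_of_lt _ _ _ _ (by simpa using k.isLt)
  -- rotate reindexing
  have hcomp := Equiv.sum_comp (Equiv.mulRight (finRotate (n+1)))
    (fun σ : Equiv.Perm (Fin (n+1)) => ((Equiv.Perm.sign σ : ℤˣ) : ℤ)
      * g' (fun k : Fin n => ptuple Γ vtx σ k.castSucc))
  have hB : ∑ σ : Equiv.Perm (Fin (n+1)), ((Equiv.Perm.sign σ : ℤˣ) : ℤ)
        * g' (fun k : Fin n => ptuple Γ vtx σ k.castSucc)
      = (-1 : ℤ) ^ n * ∑ σ : Equiv.Perm (Fin (n+1)), ((Equiv.Perm.sign σ : ℤˣ) : ℤ)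
        * g' (fun i : Fin n => ptuple Γ vtx σ i.succ) := by
    rw [← hcomp, Finset.mul_sum]
    refine Finset.sum_congr rfl fun σ _ => ?_
    have hrot : (fun k : Fin n =>
        ptuple Γ vtx ((Equiv.mulRight (finRotate (n+1))) σ) k.castSucc)
        = fun i : Fin n => ptuple Γ vtx σ i.succ := by
      funext k
      simp only [ptuple, Equiv.coe_mulRight, Equiv.Perm.mul_apply, finRotate_succ_apply,
        Fin.coeSucc_eq_succ]
    have hsignρ : ((Equiv.Perm.sign ((Equiv.mulRight (finRotate (n+1))) σ) : ℤˣ) : ℤ)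
        = ((Equiv.Perm.sign σ : ℤˣ) : ℤ) * (-1 : ℤ) ^ n := by
      simp only [Equiv.coe_mulRight]
      rw [map_mul, sign_finRotate]
      simp
    rw [hrot, hsignρ]
    ring
  have hpull : ∑ σ : Equiv.Perm (Fin (n+1)), ((Equiv.Perm.sign σ : ℤˣ) : ℤ)
        * ((-1 : ℤ) ^ (((Fin.last n : Fin (n+1)) : ℕ) + 1) •
            g' (Fin.contractNth (Fin.last n) (· * ·) (ptuple Γ vtx σ)))
      = (-1 : ℤ) ^ (n + 1) * ∑ σ : Equiv.Perm (Fin (n+1)), ((Equiv.Perm.sign σ : ℤˣ) : ℤ)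
        * g' (fun k : Fin n => ptuple Γ vtx σ k.castSucc) := by
    rw [Finset.mul_sum]
    refine Finset.sum_congr rfl fun σ _ => ?_
    rw [hlastface σ]
    simp only [Fin.val_last, smul_eq_mul]
    ring
  rw [hpull, hB, ← mul_assoc, ← pow_add,
    Odd.neg_one_pow (by exact ⟨n, by ring⟩ : Odd (n + 1 + n))]
  ring

end RaagProof


open CategoryTheory Limits in
/-- If the finite simple graph `Γ` has clique number `m`, then the group cohomology of
`A_Γ` in degree `m` with coefficients in `ℤ` (trivial action) is nonzero:
`H^m(A_Γ; ℤ) ≠ 0`. Together with the vanishing above degree `m`, this says the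
cohomological dimension of `A_Γ` equals the clique number of `Γ`, i.e. the dimension
of the Salvetti complex. -/
theorem raag_cohomology_nonzero_at_cliqueNum {V : Type} [Fintype V]
    (Γ : SimpleGraph V) (m : ℕ)
    (hclique : ∃ s : Finset V, Γ.IsNClique m s)
    (hmax : ∀ s : Finset V, Γ.IsClique (↑s : Set V) → s.card ≤ m) :
    ¬ IsZero (groupCohomology (Rep.trivial ℤ (RAAG Γ) ℤ) m) := by

  classical
  intro hzero
  obtain ⟨s, hs⟩ := hclique
  have hcard : Fintype.card {x // x ∈ s} = m := by
    rw [Fintype.card_coe]; exact hs.card_eq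
  set e : Fin m ≃ {x // x ∈ s} := (Fintype.equivFinOfCardEq hcard).symm with he
  set vtx : Fin m → V := fun i => (e i : V) with hvtx
  have hinj : Function.Injective vtx := fun i j hij => e.injective (Subtype.ext hij)
  have hadj : ∀ i j : Fin m, i ≠ j → Γ.Adj (vtx i) (vtx j) := fun i j hij =>
    hs.isClique (Finset.mem_coe.2 (e i).2) (Finset.mem_coe.2 (e j).2)
      (fun hh => hij (e.injective (Subtype.ext hh)))
  have hex : (groupCohomology.inhomogeneousCochains (Rep.trivial ℤ (RAAG Γ) ℤ)).ExactAt m :=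
    (HomologicalComplex.exactAt_iff_isZero_homology _ m).mpr hzero
  -- the cup cochain is a cocycle
  have hcocycle : (inhomogeneousCochains.d (Rep.trivial ℤ (RAAG Γ) ℤ) m)
      (RaagProof.cup Γ vtx) = 0 := by
    funext gg
    have h0 := RaagProof.cup_cocycle vtx gg
    simp only [inhomogeneousCochains.d_hom_apply, Pi.zero_apply]
    exact h0
  rcases m with _ | n
  · -- degree 0
    have hex' := (HomologicalComplex.exactAt_iff'
      (groupCohomology.inhomogeneousCochains (Rep.trivial ℤ (RAAG Γ) ℤ)) 0 0 1
      (CochainComplex.prev_nat_zero) (by simp)).mp hex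
    rw [ShortComplex.moduleCat_exact_iff] at hex'
    have hg0 : ((groupCohomology.inhomogeneousCochains
        (Rep.trivial ℤ (RAAG Γ) ℤ)).sc' 0 0 1).g (RaagProof.cup Γ vtx) = 0 := by
      show ((groupCohomology.inhomogeneousCochains (Rep.trivial ℤ (RAAG Γ) ℤ)).d 0 1)
        (RaagProof.cup Γ vtx) = 0
      rw [groupCohomology.inhomogeneousCochains.d_def]
      exact hcocycle
    obtain ⟨y, hy⟩ := hex' (RaagProof.cup Γ vtx) hg0
    have hzeromap : ((groupCohomology.inhomogeneousCochains
        (Rep.trivial ℤ (RAAG Γ) ℤ)).sc' 0 0 1).f = 0 := by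
      show (groupCohomology.inhomogeneousCochains (Rep.trivial ℤ (RAAG Γ) ℤ)).d 0 0 = 0
      exact (groupCohomology.inhomogeneousCochains (Rep.trivial ℤ (RAAG Γ) ℤ)).shape 0 0 (by simp)
    rw [hzeromap] at hy
    have h1 : RaagProof.cup Γ vtx (fun _ => 1) = 0 := by
      rw [← hy]; rfl
    rw [RaagProof.cup, Finset.univ_eq_empty, Finset.prod_empty] at h1
    exact one_ne_zero h1
  · -- degree n + 1
    have hex' := (HomologicalComplex.exactAt_iff'
      (groupCohomology.inhomogeneousCochains (Rep.trivial ℤ (RAAG Γ) ℤ)) n (n+1) (n+2)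
      (CochainComplex.prev_nat_succ n) (by simp)).mp hex
    rw [ShortComplex.moduleCat_exact_iff] at hex'
    have hg0 : ((groupCohomology.inhomogeneousCochains
        (Rep.trivial ℤ (RAAG Γ) ℤ)).sc' n (n+1) (n+2)).g (RaagProof.cup Γ vtx) = 0 := by
      show ((groupCohomology.inhomogeneousCochains (Rep.trivial ℤ (RAAG Γ) ℤ)).d (n+1) (n+2))
        (RaagProof.cup Γ vtx) = 0
      rw [groupCohomology.inhomogeneousCochains.d_def]
      exact hcocycle
    obtain ⟨y, hy⟩ := hex' (RaagProof.cup Γ vtx) hg0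
    have hy' : (inhomogeneousCochains.d (Rep.trivial ℤ (RAAG Γ) ℤ) n) y
        = RaagProof.cup Γ vtx := by
      rw [← hy]
      show _ = ((groupCohomology.inhomogeneousCochains (Rep.trivial ℤ (RAAG Γ) ℤ)).d n (n+1)) y
      rw [groupCohomology.inhomogeneousCochains.d_def]
    have hdy : (inhomogeneousCochains.d (Rep.trivial ℤ (RAAG Γ) ℤ) n) y
        = fun gg : Fin (n+1) → RAAG Γ => ((y : (Fin n → RAAG Γ) → ℤ) (fun i => gg i.succ)
            + ∑ j : Fin (n + 1), (-1 : ℤ) ^ ((j : ℕ) + 1) •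
              (y : (Fin n → RAAG Γ) → ℤ) (Fin.contractNth j (· * ·) gg)) := by
      funext gg
      simp only [inhomogeneousCochains.d_hom_apply]
      rfl
    have hev0 := RaagProof.ev_d vtx hinj hadj (y : (Fin n → RAAG Γ) → ℤ)
    rw [← hdy, hy', RaagProof.ev_cup vtx hinj] at hev0
    exact one_ne_zero hev0
end
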